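/- For a positively t-determined module M, the map Φ_M: M → r^*M defined on a homogeneous element u ∈ M_a by Φ_M(u) = (φ_a^M)^{-1}(x^{a·(t−1)}·u), where φ_a^M: M_{r(a)} → M_{a·t} is the multiplication by x^{a·t − r(a)}, is a well-defined morphism of ℤ^n-graded S-modules; moreover, if M is squarefree (positively 1-determined) then Φ_M is an isomorphism. -/

import Mathlib

open MvPolynomial

noncomputable def mono (K : Type) [Field K] {n : ℕ} (a : Fin n → ℕ) : MvPolynomial (Fin n) K :=
  monomial (Finsupp.equivFunOnFinite.symm a) 1

def rmap {n : ℕ} (t a : Fin n → ℕ) : Fin n → ℕ := fun i => if 0 < a i then t i else 0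

def sqrtv {n : ℕ} (a : Fin n → ℕ) : Fin n → ℕ := fun i => if 0 < a i then 1 else 0

structure MultiGrading (K : Type) [Field K] (n : ℕ) (M : Type) [AddCommGroup M]
    [Module (MvPolynomial (Fin n) K) M] [Module K M]
    [IsScalarTower K (MvPolynomial (Fin n) K) M] where
  g : (Fin n → ℕ) → Submodule K M
  internal : DirectSum.IsInternal g
  compat : ∀ a b : Fin n → ℕ, ∀ m ∈ g a, mono K b • m ∈ g (a + b)

variable {K : Type} [Field K] {n : ℕ}

def PosDetermined {M : Type} [AddCommGroup M] [Module (MvPolynomial (Fin n) K) M] [Module K M]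
    [IsScalarTower K (MvPolynomial (Fin n) K) M] (G : MultiGrading K n M) (t : Fin n → ℕ) : Prop :=
  ∀ (a : Fin n → ℕ) (i : Fin n), t i ≤ a i →
    Set.BijOn (fun m => (X i : MvPolynomial (Fin n) K) • m) (G.g a : Set M) (G.g (a + Pi.single i 1) : Set M)

def IsRStar {M N : Type} [AddCommGroup M] [Module (MvPolynomial (Fin n) K) M] [Module K M]
    [IsScalarTower K (MvPolynomial (Fin n) K) M]
    [AddCommGroup N] [Module (MvPolynomial (Fin n) K) N] [Module K N]
    [IsScalarTower K (MvPolynomial (Fin n) K) N]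
    (t : Fin n → ℕ) (G : MultiGrading K n M) (H : MultiGrading K n N) : Prop :=
  ∃ e : (Fin n → ℕ) → (M →ₗ[K] N),
    (∀ a, Set.InjOn (e a) (G.g (rmap t a))) ∧
    (∀ a, e a '' (G.g (rmap t a)) = (H.g a : Set N)) ∧
    (∀ a b : Fin n → ℕ, ∀ m ∈ G.g (rmap t a),
      e (a + b) (mono K (rmap t (a + b) - rmap t a) • m) = mono K b • e a m)

noncomputable def mdim (R : Type) [CommRing R] (M : Type) [AddCommGroup M] [Module R M] :
    WithBot ℕ∞ :=
  ringKrullDim (R ⧸ (⊤ : Submodule R M).annihilator)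

noncomputable def mdepth (K : Type) [Field K] (n : ℕ) (M : Type) [AddCommGroup M] [Module (MvPolynomial (Fin n) K) M] : ℕ :=
  sSup {k : ℕ | ∃ rs : List (MvPolynomial (Fin n) K), rs.length = k ∧
    (∀ r ∈ rs, r ∈ Ideal.span (Set.range (X : Fin n → MvPolynomial (Fin n) K))) ∧
    RingTheory.Sequence.IsRegular M rs}

noncomputable def IsCM (K : Type) [Field K] (n : ℕ) (M : Type) [AddCommGroup M] [Module (MvPolynomial (Fin n) K) M] : Prop :=
  (mdepth K n M : WithBot ℕ∞) = mdim (MvPolynomial (Fin n) K) M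

section AuxLemmas

lemma equivFun_symm_add (a b : Fin n → ℕ) :
    Finsupp.equivFunOnFinite.symm (a + b) =
      Finsupp.equivFunOnFinite.symm a + Finsupp.equivFunOnFinite.symm b := by
  ext i; simp

lemma mono_mul (a b : Fin n → ℕ) : mono K a * mono K b = mono K (a + b) := by
  simp only [mono, monomial_mul, one_mul, equivFun_symm_add]

lemma mono_zero : mono K (0 : Fin n → ℕ) = 1 := by
  have h : Finsupp.equivFunOnFinite.symm (0 : Fin n → ℕ) = 0 := by ext i; simp
  rw [mono, h, monomial_zero', C_1]

lemma mono_single (i : Fin n) : mono K (Pi.single i 1) = X i := by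
  have h : Finsupp.equivFunOnFinite.symm (Pi.single i 1 : Fin n → ℕ) = Finsupp.single i 1 := by
    ext j
    by_cases hj : j = i <;> simp [hj, Finsupp.single_apply, Pi.single_apply, eq_comm]
  rw [mono, h]
  rfl

variable {M : Type} [AddCommGroup M] [Module (MvPolynomial (Fin n) K) M]
  [Module K M] [IsScalarTower K (MvPolynomial (Fin n) K) M]

omit [Module K M] [IsScalarTower K (MvPolynomial (Fin n) K) M] in
lemma mono_smul_mono_smul (a b : Fin n → ℕ) (m : M) :
    mono K a • mono K b • m = mono K (a + b) • m := by
  rw [← mul_smul, mono_mul]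

omit [Module K M] [IsScalarTower K (MvPolynomial (Fin n) K) M] in
lemma mono_zero_smul (m : M) : mono K (0 : Fin n → ℕ) • m = m := by
  rw [mono_zero, one_smul]

lemma smul_comm_KS (k : K) (p : MvPolynomial (Fin n) K) (m : M) :
    p • (k • m) = k • (p • m) := by
  calc p • (k • m) = p • ((k • (1 : MvPolynomial (Fin n) K)) • m) := by
        rw [smul_assoc, one_smul]
    _ = (p * (k • (1 : MvPolynomial (Fin n) K))) • m := (mul_smul _ _ _).symm
    _ = (k • (p * 1)) • m := by rw [mul_smul_comm]
    _ = k • (p • m) := by rw [mul_one, smul_assoc]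

lemma bijOn_mono (G : MultiGrading K n M) {t : Fin n → ℕ} (hM : PosDetermined G t) :
    ∀ (N : ℕ) (b c : Fin n → ℕ), (∑ i, c i) ≤ N → (∀ i, 0 < c i → t i ≤ b i) →
      Set.BijOn (fun m => mono K c • m) (G.g b : Set M) (G.g (b + c) : Set M) := by
  intro N
  induction N with
  | zero =>
    intro b c hc _
    have hc0 : c = 0 := funext fun i =>
      Finset.sum_eq_zero_iff.mp (Nat.le_zero.mp hc) i (Finset.mem_univ i)
    subst hc0
    have hfun : (fun m : M => mono K (0 : Fin n → ℕ) • m) = id := funext fun m => mono_zero_smul m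
    rw [hfun, add_zero]
    exact Set.bijOn_id _
  | succ N ih =>
    intro b c hc hcond
    by_cases hc0 : c = 0
    · subst hc0
      have hfun : (fun m : M => mono K (0 : Fin n → ℕ) • m) = id := funext fun m => mono_zero_smul m
      rw [hfun, add_zero]
      exact Set.bijOn_id _
    · obtain ⟨i, hi⟩ := Function.ne_iff.mp hc0
      simp only [Pi.zero_apply] at hi
      set c' : Fin n → ℕ := Function.update c i (c i - 1) with hc'def
      have hle : ∀ j, c' j ≤ c j := by
        intro j
        by_cases hj : j = i
        · subst hj; simp [hc'def]
        · simp [hc'def, Function.update_of_ne hj]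
      have hsplit : c = c' + Pi.single i 1 := by
        funext j
        by_cases hj : j = i
        · subst hj; simp [hc'def]; omega
        · simp [hc'def, Function.update_of_ne hj, Pi.single_apply, hj]
      have hsum : ∑ j, c' j ≤ N := by
        have hlt : ∑ j, c' j < ∑ j, c j := by
          refine Finset.sum_lt_sum (fun j _ => hle j) ⟨i, Finset.mem_univ i, ?_⟩
          simp [hc'def]; omega
        omega
      have hcond' : ∀ j, 0 < c' j → t j ≤ b j := fun j hj =>
        hcond j (lt_of_lt_of_le hj (hle j))
      have hti : t i ≤ b i + c' i :=
        le_trans (hcond i (Nat.pos_of_ne_zero hi)) (Nat.le_add_right _ _)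
      have key := (hM (b + c') i hti).comp (ih b c' hsum hcond')
      have hfun : ((fun m : M => (X i : MvPolynomial (Fin n) K) • m) ∘
          fun m : M => mono K c' • m) = fun m : M => mono K c • m := by
        funext m
        simp only [Function.comp_apply]
        rw [← mono_single, mono_smul_mono_smul]
        have h2 : Pi.single i 1 + c' = c := by rw [hsplit, add_comm]
        rw [h2]
      have hidx : b + c' + Pi.single i 1 = b + c := by rw [hsplit, add_assoc]
      rw [← hfun, ← hidx]
      exact key

end AuxLemmas

/-- for a positively `t`-determined module `M`, the map
`Φ_M : M → r^*M`, `u ∈ M_a ↦ (φ_a^M)⁻¹(x^{a·(t−1)}·u)`, where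
`φ_a^M = x^{a·t − r(a)}· : M_{r(a)} → M_{a·t}`, is a well-defined morphism of graded modules,
and it is an isomorphism when `M` is squarefree (positively `1`-determined).
Here `N` together with the family `e` realizes `r^*M`. -/
theorem phi_exists {M N : Type} [AddCommGroup M] [Module (MvPolynomial (Fin n) K) M]
    [Module K M] [IsScalarTower K (MvPolynomial (Fin n) K) M]
    [AddCommGroup N] [Module (MvPolynomial (Fin n) K) N] [Module K N]
    [IsScalarTower K (MvPolynomial (Fin n) K) N]
    (t : Fin n → ℕ) (ht : ∀ i, 1 ≤ t i)
    (G : MultiGrading K n M) [Module.Finite (MvPolynomial (Fin n) K) M]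
    (hM : PosDetermined G t)
    (H : MultiGrading K n N)
    (e : (Fin n → ℕ) → (M →ₗ[K] N))
    (he1 : ∀ a, Set.InjOn (e a) (G.g (rmap t a)))
    (he2 : ∀ a, e a '' (G.g (rmap t a)) = (H.g a : Set N))
    (he3 : ∀ a b : Fin n → ℕ, ∀ m ∈ G.g (rmap t a),
      e (a + b) (mono K (rmap t (a + b) - rmap t a) • m) = mono K b • e a m) :
    ∃ Φ : M →ₗ[MvPolynomial (Fin n) K] N,
      (∀ a : Fin n → ℕ, ∀ u ∈ G.g a, Φ u ∈ H.g a) ∧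
      (∀ a : Fin n → ℕ, ∀ u ∈ G.g a, ∀ v ∈ G.g (rmap t a),
        mono K (a * t - rmap t a) • v = mono K (a * (t - 1)) • u → Φ u = e a v) ∧
      (PosDetermined G (fun _ => 1) → Function.Bijective Φ) := by
    classical
  have hrle : ∀ (a : Fin n → ℕ) (i : Fin n), rmap t a i ≤ a i * t i := by
    intro a i
    simp only [rmap]
    split
    · exact Nat.le_mul_of_pos_left _ (by assumption)
    · exact Nat.zero_le _
  have hpos : ∀ (a : Fin n → ℕ) (i : Fin n), 0 < (a * t - rmap t a) i → 0 < a i := by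
    intro a i h
    by_contra h0
    have ha : a i = 0 := by omega
    simp [Pi.sub_apply, Pi.mul_apply, ha, rmap] at h
  have hrmono : ∀ (a b : Fin n → ℕ) (i : Fin n), rmap t a i ≤ rmap t (a + b) i := by
    intro a b i
    simp only [rmap, Pi.add_apply]
    split
    · split
      · exact le_rfl
      · omega
    · exact Nat.zero_le _
  have natkey : ∀ x y u : ℕ, ((x + y) * (1 + u) - x * (1 + u)) + x * u = (x + y) * u + y := by
    intro x y u
    rw [Nat.add_mul, Nat.add_mul, Nat.mul_add, Nat.mul_add, Nat.mul_one, Nat.mul_one]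
    generalize x * u = p
    generalize y * u = q
    omega
  have I0 : ∀ a : Fin n → ℕ, a + a * (t - 1) = a * t := by
    intro a; funext i
    simp only [Pi.add_apply, Pi.mul_apply, Pi.sub_apply, Pi.one_apply]
    obtain ⟨u, hu⟩ := Nat.exists_eq_add_of_le (ht i)
    rw [hu]
    have h1 : 1 + u - 1 = u := by omega
    rw [h1, Nat.mul_add, Nat.mul_one]
  have I0' : ∀ a : Fin n → ℕ, rmap t a + (a * t - rmap t a) = a * t := by
    intro a; funext i
    simp only [Pi.add_apply, Pi.sub_apply, Pi.mul_apply]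
    have h := hrle a i
    generalize a i * t i = q at *
    omega
  have I3 : ∀ a b : Fin n → ℕ, rmap t a + (rmap t (a + b) - rmap t a) = rmap t (a + b) := by
    intro a b; funext i
    simp only [Pi.add_apply, Pi.sub_apply]
    have h := hrmono a b i
    omega
  have I1 : ∀ a b : Fin n → ℕ,
      ((a + b) * t - rmap t (a + b)) + (rmap t (a + b) - rmap t a)
        = ((a + b) * t - a * t) + (a * t - rmap t a) := by
    intro a b; funext i
    simp only [Pi.add_apply, Pi.sub_apply, Pi.mul_apply]
    have h1 := hrle a i
    have h2 := hrle (a + b) i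
    simp only [Pi.add_apply] at h2
    have h3 := hrmono a b i
    have h4 : a i * t i ≤ (a i + b i) * t i := Nat.mul_le_mul_right _ (Nat.le_add_right _ _)
    generalize a i * t i = q at *
    generalize (a i + b i) * t i = p at *
    omega
  have I2 : ∀ a b : Fin n → ℕ,
      ((a + b) * t - a * t) + a * (t - 1) = (a + b) * (t - 1) + b := by
    intro a b; funext i
    simp only [Pi.add_apply, Pi.sub_apply, Pi.mul_apply, Pi.one_apply]
    obtain ⟨u, hu⟩ := Nat.exists_eq_add_of_le (ht i)
    rw [hu]
    have h1 : 1 + u - 1 = u := by omega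
    rw [h1]
    exact natkey (a i) (b i) u
  have hφ : ∀ a : Fin n → ℕ, Set.BijOn (fun m : M => mono K (a * t - rmap t a) • m)
      (G.g (rmap t a) : Set M) (G.g (a * t) : Set M) := by
    intro a
    have h := bijOn_mono G hM (∑ i, (a * t - rmap t a) i) (rmap t a) (a * t - rmap t a)
      le_rfl (fun i hi => by
        have hp := hpos a i hi
        simp [rmap, hp])
    rwa [I0' a] at h
  have hw : ∀ (a : Fin n → ℕ) (u : M), u ∈ G.g a →
      ∃ v, v ∈ G.g (rmap t a) ∧ mono K (a * t - rmap t a) • v = mono K (a * (t - 1)) • u := by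
    intro a u hu
    have hmem : mono K (a * (t - 1)) • u ∈ G.g (a * t) := by
      have h := G.compat a (a * (t - 1)) u hu
      rwa [I0 a] at h
    obtain ⟨v, hv, hveq⟩ := (hφ a).surjOn hmem
    exact ⟨v, hv, hveq⟩
  choose w hw1 hw2 using hw
  have hwuniq : ∀ (a : Fin n → ℕ) (u : M) (hu : u ∈ G.g a) (v : M),
      v ∈ G.g (rmap t a) →
      mono K (a * t - rmap t a) • v = mono K (a * (t - 1)) • u → v = w a u hu := by
    intro a u hu v hv hveq
    exact (hφ a).injOn hv (hw1 a u hu) (hveq.trans (hw2 a u hu).symm)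
  let f : ∀ a : Fin n → ℕ, (G.g a) →ₗ[K] N := fun a =>
    { toFun := fun u => e a (w a u.1 u.2)
      map_add' := by
        intro u v
        have h : w a (↑u + ↑v) (add_mem u.2 v.2) = w a ↑u u.2 + w a ↑v v.2 := by
          symm
          apply hwuniq
          · exact add_mem (hw1 a ↑u u.2) (hw1 a ↑v v.2)
          · rw [smul_add, hw2 a ↑u u.2, hw2 a ↑v v.2, ← smul_add]
        show e a (w a (↑u + ↑v) (add_mem u.2 v.2)) = _
        rw [h, map_add]
      map_smul' := by
        intro k u
        have h : w a (k • ↑u) (Submodule.smul_mem _ k u.2) = k • w a ↑u u.2 := by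
          symm
          apply hwuniq
          · exact Submodule.smul_mem _ k (hw1 a ↑u u.2)
          · rw [smul_comm_KS, hw2 a ↑u u.2, ← smul_comm_KS]
        show e a (w a (k • ↑u) (Submodule.smul_mem _ k u.2)) = k • e a (w a ↑u u.2)
        rw [h, map_smul] }
  let E : (DirectSum (Fin n → ℕ) (fun a => G.g a)) ≃ₗ[K] M :=
    LinearEquiv.ofBijective (DirectSum.coeLinearMap G.g) G.internal
  let Φ₀ : M →ₗ[K] N :=
    (DirectSum.toModule K (Fin n → ℕ) N f) ∘ₗ (E.symm : M →ₗ[K] DirectSum (Fin n → ℕ) (fun a => G.g a))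
  have hEsymm : ∀ (a : Fin n → ℕ) (u : M) (hu : u ∈ G.g a),
      E.symm u = DirectSum.lof K (Fin n → ℕ) (fun a => G.g a) a ⟨u, hu⟩ := by
    intro a u hu
    rw [LinearEquiv.symm_apply_eq]
    symm
    show DirectSum.coeLinearMap G.g _ = u
    rw [DirectSum.lof_eq_of, DirectSum.coeLinearMap_of]
  have hpiece : ∀ (a : Fin n → ℕ) (u : M) (hu : u ∈ G.g a), Φ₀ u = e a (w a u hu) := by
    intro a u hu
    show DirectSum.toModule K (Fin n → ℕ) N f (E.symm u) = _
    rw [hEsymm a u hu, DirectSum.toModule_lof]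
    rfl
  have hmono : ∀ (b a : Fin n → ℕ) (u : M) (hu : u ∈ G.g a),
      Φ₀ (mono K b • u) = mono K b • Φ₀ u := by
    intro b a u hu
    have humem : mono K b • u ∈ G.g (a + b) := G.compat a b u hu
    rw [hpiece (a + b) _ humem, hpiece a u hu]
    have hkey : mono K (rmap t (a + b) - rmap t a) • w a u hu
        = w (a + b) (mono K b • u) humem := by
      apply hwuniq
      · have h := G.compat (rmap t a) (rmap t (a + b) - rmap t a) _ (hw1 a u hu)
        rwa [I3 a b] at h
      · rw [mono_smul_mono_smul, I1 a b, ← mono_smul_mono_smul, hw2 a u hu,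
          mono_smul_mono_smul, I2 a b, ← mono_smul_mono_smul]
    rw [← hkey, he3 a b _ (hw1 a u hu)]
  have htopM : ∀ m : M, m ∈ ⨆ a, G.g a := by
    intro m
    rw [G.internal.submodule_iSup_eq_top]
    exact Submodule.mem_top
  have hmono' : ∀ (b : Fin n → ℕ) (m : M), Φ₀ (mono K b • m) = mono K b • Φ₀ m := by
    intro b m
    refine Submodule.iSup_induction (motive := fun m => Φ₀ (mono K b • m) = mono K b • Φ₀ m) G.g
      (htopM m) (fun a u hu => hmono b a u hu) (by simp) ?_
    intro x y hx hy
    rw [smul_add, map_add, hx, hy, map_add, smul_add]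
  have hS : ∀ (p : MvPolynomial (Fin n) K) (m : M), Φ₀ (p • m) = p • Φ₀ m := by
    intro p
    induction p using MvPolynomial.induction_on with
    | C c =>
      intro m
      have h1 : (C c : MvPolynomial (Fin n) K) • m = c • m := by
        rw [← MvPolynomial.algebraMap_eq, algebraMap_smul]
      have h2 : (C c : MvPolynomial (Fin n) K) • Φ₀ m = c • Φ₀ m := by
        rw [← MvPolynomial.algebraMap_eq, algebraMap_smul]
      rw [h1, map_smul, h2]
    | add p q hp hq =>
      intro m
      rw [add_smul, map_add, hp, hq, add_smul]
    | mul_X p i hp =>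
      intro m
      rw [mul_smul, hp, ← mono_single i, hmono', mono_single i, ← mul_smul]
  refine ⟨{ toFun := Φ₀, map_add' := Φ₀.map_add, map_smul' := hS }, ?_, ?_, ?_⟩
  · intro a u hu
    show Φ₀ u ∈ H.g a
    rw [hpiece a u hu]
    have h := he2 a
    have hmem : e a (w a u hu) ∈ (H.g a : Set N) := h ▸ ⟨w a u hu, hw1 a u hu, rfl⟩
    exact hmem
  · intro a u hu v hv hveq
    show Φ₀ u = e a v
    exact (hpiece a u hu).trans (congrArg (e a) (hwuniq a u hu v hv hveq)).symm
  · intro h1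
    have hμ : ∀ a : Fin n → ℕ, Set.BijOn (fun m : M => mono K (a * (t - 1)) • m)
        (G.g a : Set M) (G.g (a * t) : Set M) := by
      intro a
      have h := bijOn_mono G h1 (∑ i, (a * (t - 1)) i) a (a * (t - 1)) le_rfl (fun i hi => by
        simp only [Pi.mul_apply, Pi.sub_apply, Pi.one_apply] at hi
        show 1 ≤ a i
        by_contra h0
        push_neg at h0
        have ha : a i = 0 := by omega
        rw [ha] at hi
        simp at hi)
      rwa [I0 a] at h
    let g : ∀ a : Fin n → ℕ, (G.g a) →ₗ[K] (H.g a) := fun a =>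
      LinearMap.codRestrict (H.g a) (f a) (fun u => by
        have h := he2 a
        have hmem : e a (w a u.1 u.2) ∈ (H.g a : Set N) := h ▸ ⟨w a u.1 u.2, hw1 a u.1 u.2, rfl⟩
        exact hmem)
    have hginj : ∀ a : Fin n → ℕ, Function.Injective (g a) := by
      intro a u v huv
      have h : e a (w a u.1 u.2) = e a (w a v.1 v.2) := congrArg Subtype.val huv
      have h2 : w a u.1 u.2 = w a v.1 v.2 := he1 a (hw1 a u.1 u.2) (hw1 a v.1 v.2) h
      have h3 : mono K (a * (t - 1)) • u.1 = mono K (a * (t - 1)) • v.1 := by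
        rw [← hw2 a u.1 u.2, ← hw2 a v.1 v.2, h2]
      exact Subtype.ext ((hμ a).injOn u.2 v.2 h3)
    let Ψ : M →ₗ[K] N := (DirectSum.coeLinearMap H.g) ∘ₗ
      (DFinsupp.mapRange.linearMap g) ∘ₗ (E.symm : M →ₗ[K] DirectSum (Fin n → ℕ) (fun a => G.g a))
    have hΨpiece : ∀ (a : Fin n → ℕ) (u : M) (hu : u ∈ G.g a), Ψ u = e a (w a u hu) := by
      intro a u hu
      show DirectSum.coeLinearMap H.g (DFinsupp.mapRange.linearMap g (E.symm u)) = _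
      rw [hEsymm a u hu]
      have hmr : DFinsupp.mapRange.linearMap g
          (DirectSum.lof K (Fin n → ℕ) (fun a => G.g a) a ⟨u, hu⟩)
          = DirectSum.lof K (Fin n → ℕ) (fun a => H.g a) a (g a ⟨u, hu⟩) := by
        exact DFinsupp.mapRange_single (hf := fun i => (g i).map_zero)
      rw [hmr, DirectSum.lof_eq_of, DirectSum.coeLinearMap_of]
      rfl
    have hΨeq : ∀ m : M, Φ₀ m = Ψ m := by
      intro m
      refine Submodule.iSup_induction (motive := fun m => Φ₀ m = Ψ m) G.g (htopM m)
        (fun a u hu => by show Φ₀ u = Ψ u; rw [hpiece a u hu, hΨpiece a u hu]) (by simp) ?_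
      intro x y hx hy
      rw [map_add, map_add, hx, hy]
    have hcoe : Function.Injective (DirectSum.coeLinearMap H.g) := H.internal.injective
    have hmrinj : Function.Injective (DFinsupp.mapRange.linearMap g) := by
      intro x y hxy
      have hpt : ∀ b, x b = y b := by
        intro b
        apply hginj b
        exact congrFun (congrArg (DFunLike.coe) hxy) b
      exact DFinsupp.ext hpt
    have hinj : Function.Injective Φ₀ := by
      intro x y hxy
      rw [hΨeq x, hΨeq y] at hxy
      exact E.symm.injective (hmrinj (hcoe hxy))
    have hsurj : Function.Surjective Φ₀ := by
      intro y
      have hy : y ∈ ⨆ a, H.g a := by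
        rw [H.internal.submodule_iSup_eq_top]
        exact Submodule.mem_top
      refine Submodule.iSup_induction (motive := fun y => ∃ m, Φ₀ m = y) H.g hy ?_ ⟨0, map_zero _⟩ ?_
      · intro a y hy
        have hy' : y ∈ (H.g a : Set N) := hy
        rw [← he2 a] at hy'
        obtain ⟨v, hv, rfl⟩ := hy'
        have hv' : v ∈ G.g (rmap t a) := hv
        have hmem : mono K (a * t - rmap t a) • v ∈ G.g (a * t) := by
          have h := G.compat (rmap t a) (a * t - rmap t a) v hv'
          rwa [I0' a] at h
        obtain ⟨u, hu, hueq⟩ := (hμ a).surjOn hmem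
        exact ⟨u, (hpiece a u hu).trans (congrArg (e a) (hwuniq a u hu v hv' hueq.symm)).symm⟩
      · intro x y ⟨mx, hmx⟩ ⟨my, hmy⟩
        exact ⟨mx + my, by rw [map_add, hmx, hmy]⟩
    exact ⟨hinj, hsurj⟩
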